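/- Let s_n = (n+1)·(n+1)^(1/(n+1)) − n·n^(1/n) for integers n ≥ 1. Then: (a) s_n tends to 1 as n → ∞; (b) 2 > s_1 > s_2 > s_3 > ⋯ > 1, i.e., the sequence is strictly decreasing, bounded above by 2, and every term exceeds 1. -/

import Mathlib

open Real Filter Set

noncomputable def s (n : ℕ) : ℝ :=
  ((n : ℝ) + 1) * ((n : ℝ) + 1) ^ (1 / ((n : ℝ) + 1)) - (n : ℝ) * (n : ℝ) ^ (1 / (n : ℝ))

noncomputable def G (x : ℝ) : ℝ := x * Real.exp (Real.log x / x)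
noncomputable def φ (x : ℝ) : ℝ := Real.exp (Real.log x / x) * ((x + 1 - Real.log x) / x)

lemma key {x : ℝ} (hx : 1 < x) : (1 - Real.log x) ^ 2 < x := by
  have hx0 : (0:ℝ) < x := by linarith
  set t := x ^ ((1:ℝ)/4) with ht
  have ht1 : 1 < t := Real.one_lt_rpow_iff_of_pos hx0 |>.2 (Or.inl ⟨hx, by norm_num⟩)
  have ht0 : 0 < t := by linarith
  have hlog : Real.log x = 4 * Real.log t := by
    rw [ht, Real.log_rpow hx0]; ring
  have hlt : Real.log t ≤ t - 1 := Real.log_le_sub_one_of_pos ht0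
  have hx4 : x = (t ^ 2) ^ 2 := by
    rw [ht, ← Real.rpow_natCast (x ^ ((1:ℝ)/4)) 2, ← Real.rpow_mul hx0.le,
      ← Real.rpow_natCast _ 2, ← Real.rpow_mul hx0.le]
    norm_num
  have hL0 : 0 < Real.log x := Real.log_pos hx
  have h1 : 1 - Real.log x < t ^ 2 := by nlinarith
  have h2 : -(t ^ 2) < 1 - Real.log x := by
    rw [hlog]; nlinarith [sq_nonneg (t - 2)]
  calc (1 - Real.log x) ^ 2 < (t ^ 2) ^ 2 := sq_lt_sq' h2 h1
    _ = x := hx4.symm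

lemma hasDerivAt_G {x : ℝ} (hx : 0 < x) : HasDerivAt G (φ x) x := by
  have hu : HasDerivAt (fun x : ℝ => Real.log x / x) ((x⁻¹ * x - Real.log x * 1) / x ^ 2) x :=
    (Real.hasDerivAt_log hx.ne').div (hasDerivAt_id x) hx.ne'
  have h := (hasDerivAt_id x).mul hu.exp
  refine h.congr_deriv ?_
  simp only [id]
  unfold φ
  field_simp
  ring

lemma hasDerivAt_φ {x : ℝ} (hx : 0 < x) :
    HasDerivAt φ (Real.exp (Real.log x / x) * (((1 - Real.log x) ^ 2 - x) / x ^ 3)) x := by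
  have hu : HasDerivAt (fun x : ℝ => Real.log x / x) ((x⁻¹ * x - Real.log x * 1) / x ^ 2) x :=
    (Real.hasDerivAt_log hx.ne').div (hasDerivAt_id x) hx.ne'
  have hv : HasDerivAt (fun x : ℝ => (x + 1 - Real.log x) / x)
      (((1 - x⁻¹) * x - (x + 1 - Real.log x) * 1) / x ^ 2) x :=
    (((hasDerivAt_id x).add_const 1).sub (Real.hasDerivAt_log hx.ne')).div (hasDerivAt_id x)
      hx.ne'
  have h := hu.exp.mul hv
  refine h.congr_deriv ?_
  field_simp
  ring

lemma contOn_φ : ContinuousOn φ (Ici 1) := by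
  intro x hx
  have hx0 : (0:ℝ) < x := lt_of_lt_of_le one_pos hx
  exact ((hasDerivAt_φ hx0).continuousAt).continuousWithinAt

lemma anti_φ : StrictAntiOn φ (Ici 1) := by
  apply strictAntiOn_of_deriv_neg (convex_Ici 1) contOn_φ
  intro x hx
  rw [interior_Ici] at hx
  have hx1 : (1:ℝ) < x := hx
  have hx0 : (0:ℝ) < x := by linarith
  rw [(hasDerivAt_φ hx0).deriv]
  have hk := key hx1
  have he : 0 < Real.exp (Real.log x / x) := Real.exp_pos _
  have hx3 : 0 < x ^ 3 := by positivity
  apply mul_neg_of_pos_of_neg he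
  exact div_neg_of_neg_of_pos (by linarith) hx3

lemma tendsto_φ : Tendsto φ atTop (nhds 1) := by
  have h1 : Tendsto (fun x : ℝ => Real.log x / x) atTop (nhds 0) :=
    Real.isLittleO_log_id_atTop.tendsto_div_nhds_zero
  have h2 : Tendsto (fun x : ℝ => Real.exp (Real.log x / x)) atTop (nhds 1) := by
    have := (Real.continuous_exp.tendsto 0).comp h1
    simpa [Function.comp_def] using this
  have h3 : Tendsto (fun x : ℝ => (x + 1 - Real.log x) / x) atTop (nhds 1) := by
    have : Tendsto (fun x : ℝ => 1 + 1 / x - Real.log x / x) atTop (nhds 1) := by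
      have h4 : Tendsto (fun x : ℝ => 1 + 1 / x) atTop (nhds 1) := by
        simpa [one_div] using (tendsto_const_nhds (x := (1:ℝ)) (f := (atTop : Filter ℝ))).add
          tendsto_inv_atTop_zero
      simpa using h4.sub h1
    apply this.congr'
    filter_upwards [eventually_gt_atTop 0] with x hx
    field_simp
  have := h2.mul h3; rw [mul_one] at this; exact this

lemma φ_ge_one {x : ℝ} (hx : 1 ≤ x) : 1 ≤ φ x := by
  apply le_of_tendsto tendsto_φ
  filter_upwards [eventually_ge_atTop x] with y hy
  rcases eq_or_lt_of_le hy with rfl | h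
  · exact le_rfl
  · exact (anti_φ hx (le_trans hx hy) h).le

lemma sEq {n : ℕ} (hn : 1 ≤ n) : s n = G ((n:ℝ) + 1) - G n := by
  have hn0 : (0:ℝ) < n := by exact_mod_cast hn
  unfold s G
  rw [Real.rpow_def_of_pos hn0, Real.rpow_def_of_pos (by linarith)]
  ring_nf

lemma mvt {n : ℕ} (hn : 1 ≤ n) : ∃ c ∈ Ioo (n:ℝ) ((n:ℝ)+1), φ c = s n := by
  have hn0 : (0:ℝ) < n := by exact_mod_cast hn
  have hlt : (n:ℝ) < (n:ℝ) + 1 := by linarith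
  have hcont : ContinuousOn G (Icc (n:ℝ) ((n:ℝ)+1)) := by
    intro x hx
    have : (0:ℝ) < x := lt_of_lt_of_le hn0 hx.1
    exact (hasDerivAt_G this).continuousAt.continuousWithinAt
  have hderiv : ∀ x ∈ Ioo (n:ℝ) ((n:ℝ)+1), HasDerivAt G (φ x) x := fun x hx =>
    hasDerivAt_G (lt_trans hn0 hx.1)
  obtain ⟨c, hc, hce⟩ := exists_hasDerivAt_eq_slope G φ hlt hcont hderiv
  refine ⟨c, hc, ?_⟩
  rw [hce, sEq hn]
  field_simp
  ring

theorem s_tendsto_and_strictly_decreasing :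
    Tendsto s atTop (nhds 1) ∧
    (∀ n : ℕ, 1 ≤ n → s (n + 1) < s n) ∧
    (∀ n : ℕ, 1 ≤ n → s n < 2) ∧
    (∀ n : ℕ, 1 ≤ n → 1 < s n) := by
  have hub : ∀ n : ℕ, 1 ≤ n → φ ((n:ℝ)+1) < s n ∧ s n < φ n := by
    intro n hn
    obtain ⟨c, hc, hce⟩ := mvt hn
    have hn1 : (1:ℝ) ≤ n := by exact_mod_cast hn
    have hc1 : (1:ℝ) ≤ c := le_trans hn1 hc.1.le
    constructor
    · rw [← hce]
      exact anti_φ hc1 (show (1:ℝ) ≤ (n:ℝ)+1 by linarith) hc.2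
    · rw [← hce]; exact anti_φ hn1 hc1 hc.1
  refine ⟨?_, ?_, ?_, ?_⟩
  · -- limit
    have hl : Tendsto (fun n : ℕ => φ n) atTop (nhds 1) :=
      tendsto_φ.comp tendsto_natCast_atTop_atTop
    have hl' : Tendsto (fun n : ℕ => φ ((n:ℝ)+1)) atTop (nhds 1) :=
      tendsto_φ.comp (tendsto_atTop_add_const_right _ 1 tendsto_natCast_atTop_atTop)
    apply tendsto_of_tendsto_of_tendsto_of_le_of_le' hl' hl
    · filter_upwards [eventually_ge_atTop 1] with n hn using (hub n hn).1.le
    · filter_upwards [eventually_ge_atTop 1] with n hn using (hub n hn).2.le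
  · -- decreasing
    intro n hn
    obtain ⟨c, hc, hce⟩ := mvt hn
    obtain ⟨c', hc', hce'⟩ := mvt (Nat.le_succ_of_le hn)
    have hn1 : (1:ℝ) ≤ n := by exact_mod_cast hn
    have hgoal : s (n+1) = φ c' := by rw [hce']
    rw [hgoal, ← hce]
    push_cast at hc'
    exact anti_φ (show (1:ℝ) ≤ c by linarith [hc.1]) (show (1:ℝ) ≤ c' by linarith [hc'.1])
      (by linarith [hc.2, hc'.1])
  · -- < 2
    intro n hn
    obtain ⟨c, hc, hce⟩ := mvt hn
    have hn1 : (1:ℝ) ≤ n := by exact_mod_cast hn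
    have h2 : φ 1 = 2 := by unfold φ; norm_num
    rw [← hce, ← h2]
    exact anti_φ (le_refl (1:ℝ)) (show (1:ℝ) ≤ c by linarith [hc.1]) (by linarith [hc.1])
  · -- > 1
    intro n hn
    have h := (hub n hn).1
    have := φ_ge_one (x := (n:ℝ)+1)
      (by have : (0:ℝ) ≤ n := Nat.cast_nonneg n; linarith)
    linarith
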